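/- Let x ∈ (−√2, √2). Then the principal value integral p.v.∫_{−√2}^{√2} √(2 − y²)/(x − y) dy exists, i.e. the limit lim_{ε→0⁺} ∫_{{y ∈ (−√2,√2) : |y − x| > ε}} √(2 − y²)/(x − y) dy exists, and it equals π·x. -/

import Mathlib

open Filter

noncomputable def Fsc (x y : ℝ) : ℝ :=
  x * Real.arcsin (y / Real.sqrt 2) - Real.sqrt (2 - y ^ 2)
    + Real.sqrt (2 - x ^ 2) * Real.log (2 - x * y + Real.sqrt (2 - x ^ 2) * Real.sqrt (2 - y ^ 2))
    - Real.sqrt (2 - x ^ 2) * Real.log (x - y)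

lemma N_pos (x y : ℝ) (hx : x ^ 2 < 2) (hy : y ^ 2 ≤ 2) :
    0 < 2 - x * y + Real.sqrt (2 - x ^ 2) * Real.sqrt (2 - y ^ 2) := by
  nlinarith [Real.sqrt_nonneg (2 - x ^ 2), Real.sqrt_nonneg (2 - y ^ 2), sq_nonneg (x - y)]

lemma abs_lt_sqrt_two {y : ℝ} (hy : y ^ 2 < 2) : |y| < Real.sqrt 2 :=
  (Real.lt_sqrt (abs_nonneg y)).2 (by rwa [sq_abs])

lemma Fsc_deriv (x y : ℝ) (hx2 : x ^ 2 < 2) (hy2 : y ^ 2 < 2) (hxy : x ≠ y) :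
    HasDerivAt (Fsc x) (Real.sqrt (2 - y ^ 2) / (x - y)) y := by
  have h2y : (0:ℝ) < 2 - y ^ 2 := by linarith
  have h2x : (0:ℝ) < 2 - x ^ 2 := by linarith
  set s := Real.sqrt (2 - x ^ 2) with hs_def
  set r := Real.sqrt (2 - y ^ 2) with hr_def
  have hr : r ^ 2 = 2 - y ^ 2 := Real.sq_sqrt h2y.le
  have hs : s ^ 2 = 2 - x ^ 2 := Real.sq_sqrt h2x.le
  have hrpos : 0 < r := Real.sqrt_pos.2 h2y
  have hspos : 0 < s := Real.sqrt_pos.2 h2x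
  have hN : 0 < 2 - x * y + s * r := N_pos x y hx2 hy2.le
  have hxy' : x - y ≠ 0 := sub_ne_zero.2 hxy
  have hy_abs : |y| < Real.sqrt 2 := abs_lt_sqrt_two hy2
  have hsqrt2 : (0:ℝ) < Real.sqrt 2 := Real.sqrt_pos.2 two_pos
  -- arcsin part
  have hne1 : y / Real.sqrt 2 ≠ -1 := by
    intro h
    have : y = -Real.sqrt 2 := by field_simp at h; linarith
    rw [this, abs_neg, abs_of_nonneg hsqrt2.le] at hy_abs
    exact lt_irrefl _ hy_abs
  have hne2 : y / Real.sqrt 2 ≠ 1 := by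
    intro h
    have hy' : y = Real.sqrt 2 := by
      field_simp at h; exact h
    rw [hy', abs_of_nonneg hsqrt2.le] at hy_abs; linarith
  have harc : HasDerivAt (fun t : ℝ => Real.arcsin (t / Real.sqrt 2)) (1 / r) y := by
    have h := (Real.hasDerivAt_arcsin hne1 hne2).comp y
      ((hasDerivAt_id y).div_const (Real.sqrt 2))
    refine h.congr_deriv (Eq.symm ?_)
    have h1 : 1 - (y / Real.sqrt 2) ^ 2 = (2 - y ^ 2) / 2 := by
      rw [div_pow, Real.sq_sqrt (by norm_num : (0:ℝ) ≤ 2)]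
      ring
    rw [h1, Real.sqrt_div (by linarith : (0:ℝ) ≤ 2 - y ^ 2), ← hr_def]
    rw [div_div_eq_mul_div, one_mul]
    field_simp
  -- sqrt part
  have hsq : HasDerivAt (fun t : ℝ => Real.sqrt (2 - t ^ 2)) (-(y / r)) y := by
    have hinner : HasDerivAt (fun t : ℝ => 2 - t ^ 2) (-(2 * y)) y := by
      simpa using (hasDerivAt_pow 2 y).const_sub 2
    have h := (Real.hasDerivAt_sqrt h2y.ne').comp y hinner
    refine h.congr_deriv (Eq.symm ?_)
    rw [← hr_def]
    field_simp
  -- log N part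
  have hNfun : HasDerivAt (fun t : ℝ => 2 - x * t + s * Real.sqrt (2 - t ^ 2))
      (-x + s * -(y / r)) y := by
    have h1 : HasDerivAt (fun t : ℝ => 2 - x * t) (-x) y := by
      simpa using ((hasDerivAt_id y).const_mul x).const_sub 2
    exact h1.add (hsq.const_mul s)
  have hlogN : HasDerivAt (fun t : ℝ => Real.log (2 - x * t + s * Real.sqrt (2 - t ^ 2)))
      ((-x + s * -(y / r)) / (2 - x * y + s * r)) y := by
    have := hNfun.log hN.ne'
    simpa [← hr_def] using this
  -- log (x - t) part
  have hlogxy : HasDerivAt (fun t : ℝ => Real.log (x - t)) ((-1) / (x - y)) y := by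
    have hinner : HasDerivAt (fun t : ℝ => x - t) (-1) y := by
      simpa using (hasDerivAt_id y).const_sub x
    exact hinner.log hxy'
  have hF : HasDerivAt (Fsc x)
      (x * (1 / r) - -(y / r) + s * ((-x + s * -(y / r)) / (2 - x * y + s * r))
        - s * ((-1) / (x - y))) y := by
    unfold Fsc
    rw [← hs_def]
    exact (((harc.const_mul x).sub hsq).add (hlogN.const_mul s)).sub (hlogxy.const_mul s)
  convert hF using 1
  have key : (2 - x * y + s * r) * (r - s) = (x * r + s * y) * (x - y) := by
    nlinarith [hr, hs]
  have hN' : 2 - x * y + r * s ≠ 0 := by rw [mul_comm r s]; exact hN.ne'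
  field_simp
  linear_combination (2 - x*y + r*s - s^2)*hr + (r*s - (2 - x*y + r*s))*hs

noncomputable def Hsc (x y : ℝ) : ℝ :=
  x * Real.arcsin (y / Real.sqrt 2) - Real.sqrt (2 - y ^ 2)
    + Real.sqrt (2 - x ^ 2) * Real.log (2 - x * y + Real.sqrt (2 - x ^ 2) * Real.sqrt (2 - y ^ 2))

lemma Fsc_eq_Hsc (x y : ℝ) :
    Fsc x y = Hsc x y - Real.sqrt (2 - x ^ 2) * Real.log (x - y) := rfl

lemma Hsc_contAt (x y : ℝ) (hx2 : x ^ 2 < 2) (hy2 : y ^ 2 ≤ 2) :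
    ContinuousAt (Hsc x) y := by
  have hN := (N_pos x y hx2 hy2).ne'
  unfold Hsc
  apply ContinuousAt.add
  · apply ContinuousAt.sub
    · exact (continuous_const.mul
        (Real.continuous_arcsin.comp (continuous_id.div_const _))).continuousAt
    · exact (Real.continuous_sqrt.comp (by continuity)).continuousAt
  · apply ContinuousAt.mul continuousAt_const
    exact ContinuousAt.log
      (((continuous_const.sub (continuous_const.mul continuous_id)).add
        (continuous_const.mul (Real.continuous_sqrt.comp (by continuity)))).continuousAt) hN

lemma Fsc_contOn (x : ℝ) (hx2 : x ^ 2 < 2) {A : Set ℝ}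
    (hA : ∀ y ∈ A, y ^ 2 ≤ 2 ∧ x ≠ y) : ContinuousOn (Fsc x) A := by
  have h1 : ContinuousOn (Hsc x) A :=
    fun y hy => (Hsc_contAt x y hx2 (hA y hy).1).continuousWithinAt
  have h2 : ContinuousOn (fun y => Real.sqrt (2 - x ^ 2) * Real.log (x - y)) A := by
    apply ContinuousOn.mul continuousOn_const
    apply ContinuousOn.log ((continuous_const.sub continuous_id).continuousOn)
    exact fun y hy => sub_ne_zero.2 (hA y hy).2
  exact (h1.sub h2).congr (fun y _ => Fsc_eq_Hsc x y)

lemma integrand_contOn (x c d : ℝ) (hne : ∀ y ∈ Set.Icc c d, x ≠ y) :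
    ContinuousOn (fun y => Real.sqrt (2 - y ^ 2) / (x - y)) (Set.Icc c d) :=
  ((Real.continuous_sqrt.comp (by continuity)).continuousOn).div
    ((continuous_const.sub continuous_id).continuousOn)
    (fun y hy => sub_ne_zero.2 (hne y hy))

lemma Fsc_FTC (x : ℝ) (hx2 : x ^ 2 < 2) {c d : ℝ} (hcd : c ≤ d)
    (hc : -Real.sqrt 2 ≤ c) (hd : d ≤ Real.sqrt 2)
    (hne : ∀ y ∈ Set.Icc c d, x ≠ y) :
    ∫ y in Set.Ioo c d, Real.sqrt (2 - y ^ 2) / (x - y) = Fsc x d - Fsc x c := by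
  have hsq2 : Real.sqrt 2 ^ 2 = 2 := Real.sq_sqrt (by norm_num)
  have hyle : ∀ y ∈ Set.Icc c d, y ^ 2 ≤ 2 := by
    intro y hy
    have h1 : -Real.sqrt 2 ≤ y := le_trans hc hy.1
    have h2 : y ≤ Real.sqrt 2 := le_trans hy.2 hd
    nlinarith
  have hylt : ∀ y ∈ Set.Ioo c d, y ^ 2 < 2 := by
    intro y hy
    have h1 : -Real.sqrt 2 < y := lt_of_le_of_lt hc hy.1
    have h2 : y < Real.sqrt 2 := lt_of_lt_of_le hy.2 hd
    nlinarith
  rw [← MeasureTheory.integral_Ioc_eq_integral_Ioo, ← intervalIntegral.integral_of_le hcd]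
  apply intervalIntegral.integral_eq_sub_of_hasDeriv_right_of_le hcd
  · exact Fsc_contOn x hx2 (fun y hy => ⟨hyle y hy, hne y hy⟩)
  · intro y hy
    exact (Fsc_deriv x y hx2 (hylt y hy) (hne y ⟨hy.1.le, hy.2.le⟩)).hasDerivWithinAt
  · apply ContinuousOn.intervalIntegrable
    rw [Set.uIcc_of_le hcd]
    exact integrand_contOn x c d hne

lemma Fsc_endpoints (x : ℝ) (hx1 : -Real.sqrt 2 < x) (hx2 : x < Real.sqrt 2) :
    Fsc x (Real.sqrt 2) - Fsc x (-Real.sqrt 2) = Real.pi * x := by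
  have hs2pos : (0:ℝ) < Real.sqrt 2 := Real.sqrt_pos.2 two_pos
  have hsq2 : Real.sqrt 2 ^ 2 = 2 := Real.sq_sqrt (by norm_num)
  have hm : Real.sqrt 2 * Real.sqrt 2 = 2 := Real.mul_self_sqrt (by norm_num)
  have e1 : Fsc x (Real.sqrt 2)
      = x * (Real.pi / 2) + Real.sqrt (2 - x ^ 2) * Real.log (Real.sqrt 2)
        + Real.sqrt (2 - x ^ 2) * Real.log (Real.sqrt 2 - x)
        - Real.sqrt (2 - x ^ 2) * Real.log (Real.sqrt 2 - x) := by
    unfold Fsc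
    rw [div_self hs2pos.ne', Real.arcsin_one, hsq2, sub_self, Real.sqrt_zero, mul_zero,
      add_zero]
    have ha : x - Real.sqrt 2 = -(Real.sqrt 2 - x) := by ring
    have hb : 2 - x * Real.sqrt 2 = Real.sqrt 2 * (Real.sqrt 2 - x) := by
      rw [mul_sub, hm]; ring
    have hpos : (0:ℝ) < Real.sqrt 2 - x := by linarith
    rw [ha, Real.log_neg_eq_log, hb, Real.log_mul hs2pos.ne' hpos.ne']
    ring
  have e2 : Fsc x (-Real.sqrt 2)
      = x * (-(Real.pi / 2)) + Real.sqrt (2 - x ^ 2) * Real.log (Real.sqrt 2)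
        + Real.sqrt (2 - x ^ 2) * Real.log (Real.sqrt 2 + x)
        - Real.sqrt (2 - x ^ 2) * Real.log (Real.sqrt 2 + x) := by
    unfold Fsc
    have hneg : -Real.sqrt 2 / Real.sqrt 2 = -1 := by
      rw [neg_div, div_self hs2pos.ne']
    rw [hneg, Real.arcsin_neg_one, neg_sq, hsq2, sub_self, Real.sqrt_zero, mul_zero,
      add_zero]
    have ha : x - -Real.sqrt 2 = Real.sqrt 2 + x := by ring
    have hb : 2 - x * -Real.sqrt 2 = Real.sqrt 2 * (Real.sqrt 2 + x) := by
      rw [mul_add, hm]; ring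
    have hpos : (0:ℝ) < Real.sqrt 2 + x := by linarith
    rw [ha, hb, Real.log_mul hs2pos.ne' hpos.ne']
    ring
  rw [e1, e2]; ring

lemma pv_cancel (x ε : ℝ) :
    (Fsc x (x - ε) - Fsc x (-Real.sqrt 2)) + (Fsc x (Real.sqrt 2) - Fsc x (x + ε))
      = Hsc x (x - ε) - Hsc x (x + ε)
        + (Fsc x (Real.sqrt 2) - Fsc x (-Real.sqrt 2)) := by
  have e1 : x - (x - ε) = ε := by ring
  have e2 : x - (x + ε) = -ε := by ring
  simp only [Fsc_eq_Hsc, e1, e2, Real.log_neg_eq_log]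
  ring

theorem stmt_18 (x : ℝ) (hx : x ∈ Set.Ioo (-Real.sqrt 2) (Real.sqrt 2)) :
    Tendsto (fun ε : ℝ =>
        ∫ y in {y : ℝ | y ∈ Set.Ioo (-Real.sqrt 2) (Real.sqrt 2) ∧ ε < |y - x|},
          Real.sqrt (2 - y ^ 2) / (x - y))
      (nhdsWithin 0 (Set.Ioi 0)) (nhds (Real.pi * x)) := by
  obtain ⟨hx1, hx2⟩ := hx
  have hsq2 : Real.sqrt 2 ^ 2 = 2 := Real.sq_sqrt (by norm_num)
  have hx2lt : x ^ 2 < 2 := by nlinarith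
  set G : ℝ → ℝ := fun ε =>
    Hsc x (x - ε) - Hsc x (x + ε) + (Fsc x (Real.sqrt 2) - Fsc x (-Real.sqrt 2))
    with hGdef
  have hε₀pos : (0:ℝ) < min (Real.sqrt 2 - x) (x + Real.sqrt 2) :=
    lt_min (by linarith) (by linarith)
  have hGcont : ContinuousAt G 0 := by
    have hg1 : ContinuousAt (Hsc x) (x - 0) := by
      simpa using Hsc_contAt x x hx2lt hx2lt.le
    have hg2 : ContinuousAt (Hsc x) (x + 0) := by
      simpa using Hsc_contAt x x hx2lt hx2lt.le
    have c1 : ContinuousAt (fun ε : ℝ => Hsc x (x - ε)) 0 :=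
      hg1.comp ((continuous_const.sub continuous_id).continuousAt)
    have c2 : ContinuousAt (fun ε : ℝ => Hsc x (x + ε)) 0 :=
      hg2.comp ((continuous_const.add continuous_id).continuousAt)
    exact (c1.sub c2).add continuousAt_const
  have hG0 : G 0 = Real.pi * x := by
    rw [hGdef]
    simp only [sub_zero, add_zero, sub_self, zero_add]
    exact Fsc_endpoints x hx1 hx2
  have hGt : Tendsto G (nhdsWithin 0 (Set.Ioi 0)) (nhds (Real.pi * x)) := by
    rw [← hG0]
    exact hGcont.continuousWithinAt.tendsto
  apply hGt.congr'
  filter_upwards [Ioo_mem_nhdsGT_of_mem (Set.left_mem_Ico.mpr hε₀pos)] with ε hε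
  obtain ⟨hε1, hε2⟩ := hε
  obtain ⟨hεa, hεb⟩ := lt_min_iff.mp hε2
  have hset : {y : ℝ | y ∈ Set.Ioo (-Real.sqrt 2) (Real.sqrt 2) ∧ ε < |y - x|}
      = Set.Ioo (-Real.sqrt 2) (x - ε) ∪ Set.Ioo (x + ε) (Real.sqrt 2) := by
    ext y
    simp only [Set.mem_setOf_eq, Set.mem_Ioo, Set.mem_union, lt_abs]
    constructor
    · rintro ⟨⟨h1, h2⟩, h3 | h4⟩
      · right; exact ⟨by linarith, h2⟩
      · left; exact ⟨h1, by linarith⟩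
    · rintro (⟨h1, h2⟩ | ⟨h1, h2⟩)
      · exact ⟨⟨h1, by linarith⟩, Or.inr (by linarith)⟩
      · exact ⟨⟨by linarith, h2⟩, Or.inl (by linarith)⟩
  have hne1 : ∀ y ∈ Set.Icc (-Real.sqrt 2) (x - ε), x ≠ y := by
    intro y hy; have := hy.2; exact (by linarith : y < x).ne'
  have hne2 : ∀ y ∈ Set.Icc (x + ε) (Real.sqrt 2), x ≠ y := by
    intro y hy; have := hy.1; exact (by linarith : x < y).ne
  have hint1 : MeasureTheory.IntegrableOn
      (fun y => Real.sqrt (2 - y ^ 2) / (x - y)) (Set.Ioo (-Real.sqrt 2) (x - ε)) := by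
    exact ((integrand_contOn x _ _ hne1).integrableOn_compact isCompact_Icc).mono_set
      Set.Ioo_subset_Icc_self
  have hint2 : MeasureTheory.IntegrableOn
      (fun y => Real.sqrt (2 - y ^ 2) / (x - y)) (Set.Ioo (x + ε) (Real.sqrt 2)) := by
    exact ((integrand_contOn x _ _ hne2).integrableOn_compact isCompact_Icc).mono_set
      Set.Ioo_subset_Icc_self
  have hdisj : Disjoint (Set.Ioo (-Real.sqrt 2) (x - ε)) (Set.Ioo (x + ε) (Real.sqrt 2)) := by
    rw [Set.disjoint_left]
    rintro y ⟨_, h1⟩ ⟨h2, _⟩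
    linarith
  rw [hset, MeasureTheory.setIntegral_union hdisj measurableSet_Ioo hint1 hint2,
    Fsc_FTC x hx2lt (by linarith) le_rfl (by linarith) hne1,
    Fsc_FTC x hx2lt (by linarith) (by linarith) le_rfl hne2]
  rw [hGdef]
  exact (pv_cancel x ε).symm
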